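/- Let G be a connected non-trivial graph, H any graph, a ∈ V(G), and x, y ∈ V(H) distinct. Then (a,x) and (a,y) are mutually maximally distant in G∘H if and only if x and y are adjacent in H*, i.e., if and only if d_H(x,y) ≥ 2 or x and y are true twins in H. -/

import Mathlib

open SimpleGraph

namespace Paper

variable {α β : Type*}

/-- The lexicographic product of two simple graphs. -/
def lexProd (G : SimpleGraph α) (H : SimpleGraph β) : SimpleGraph (α × β) where
  Adj p q := G.Adj p.1 q.1 ∨ (p.1 = q.1 ∧ H.Adj p.2 q.2)
  symm := by
    constructor
    rintro ⟨a, b⟩ ⟨c, d⟩ (h | ⟨h1, h2⟩)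
    · exact Or.inl h.symm
    · exact Or.inr ⟨h1.symm, h2.symm⟩
  loopless := by
    constructor
    rintro ⟨a, b⟩ (h | ⟨h1, h2⟩)
    · exact G.irrefl h
    · exact H.irrefl h2

/-- `u` is maximally distant from `v`. -/
def MaxDistant (G : SimpleGraph α) (u v : α) : Prop :=
  ∀ w, G.Adj u w → G.edist v w ≤ G.edist u v

/-- `u` and `v` are mutually maximally distant. -/
def MMD (G : SimpleGraph α) (u v : α) : Prop :=
  MaxDistant G u v ∧ MaxDistant G v u

/-- Two vertices are true twins if they have the same closed neighborhood. -/
def TrueTwins (G : SimpleGraph α) (u v : α) : Prop :=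
  ∀ w, (G.Adj u w ∨ u = w) ↔ (G.Adj v w ∨ v = w)

/-- The boundary of a graph: vertices belonging to some mutually maximally distant pair. -/
def boundary (G : SimpleGraph α) : Set α := {u | ∃ v, u ≠ v ∧ MMD G u v}

/-- The strong resolving graph of `G`, with vertex set the boundary of `G`. -/
def srGraph (G : SimpleGraph α) : SimpleGraph (boundary G) where
  Adj u v := u.1 ≠ v.1 ∧ MMD G u.1 v.1
  symm := ⟨fun u v h => ⟨h.1.symm, h.2.2, h.2.1⟩⟩
  loopless := ⟨fun u h => h.1 rfl⟩

/-- The graph `G*`: same vertices, `u ~ v` iff `d_G(u,v) ≥ 2` or `u,v` are true twins. -/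
def gstar (G : SimpleGraph α) : SimpleGraph α where
  Adj u v := u ≠ v ∧ (2 ≤ G.edist u v ∨ TrueTwins G u v)
  symm := by
    constructor
    rintro u v ⟨h1, (h2 | h2)⟩
    · exact ⟨h1.symm, Or.inl (by rwa [G.edist_comm] at h2)⟩
    · exact ⟨h1.symm, Or.inr fun w => (h2 w).symm⟩
  loopless := ⟨fun u h => h.1 rfl⟩

/-- `G*` with its isolated vertices removed. -/
def gstarMinus (G : SimpleGraph α) : SimpleGraph {x | ∃ y, (gstar G).Adj x y} :=
  SimpleGraph.induce _ (gstar G)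

/-- Disjoint union of two graphs. -/
def disjUnion (G : SimpleGraph α) (H : SimpleGraph β) : SimpleGraph (α ⊕ β) where
  Adj x y := match x, y with
    | Sum.inl a, Sum.inl b => G.Adj a b
    | Sum.inr a, Sum.inr b => H.Adj a b
    | _, _ => False
  symm := by
    constructor
    rintro (a | a) (b | b) h <;> simp_all <;> exact h.symm
  loopless := by
    constructor
    rintro (a | a) h <;> simp_all

/-- `k` disjoint copies of a graph. -/
def copies (k : ℕ) (G : SimpleGraph α) : SimpleGraph (Fin k × α) where
  Adj p q := p.1 = q.1 ∧ G.Adj p.2 q.2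
  symm := ⟨fun p q h => ⟨h.1.symm, h.2.symm⟩⟩
  loopless := ⟨fun p h => G.irrefl h.2⟩

/-- The join `K₁ + H` of a single vertex with `H`. -/
def joinK1 (H : SimpleGraph β) : SimpleGraph (Unit ⊕ β) where
  Adj x y := match x, y with
    | Sum.inl _, Sum.inl _ => False
    | Sum.inl _, Sum.inr _ => True
    | Sum.inr _, Sum.inl _ => True
    | Sum.inr a, Sum.inr b => H.Adj a b
  symm := by
    constructor
    rintro (a | a) (b | b) h <;> simp_all <;> exact h.symm
  loopless := by
    constructor
    rintro (a | a) h <;> simp_all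

/-- `w` strongly resolves the pair `u, v`. -/
def StronglyResolves (G : SimpleGraph α) (w u v : α) : Prop :=
  G.edist w u = G.edist w v + G.edist v u ∨ G.edist w v = G.edist w u + G.edist u v

/-- A strong metric generator. -/
def IsStrongGenerator (G : SimpleGraph α) (S : Finset α) : Prop :=
  ∀ u v : α, u ≠ v → ∃ w ∈ S, StronglyResolves G w u v

/-- The strong metric dimension. -/
noncomputable def sdim (G : SimpleGraph α) : ℕ :=
  sInf {k | ∃ S : Finset α, IsStrongGenerator G S ∧ S.card = k}

/-- A vertex cover. -/
def IsVertexCover (G : SimpleGraph α) (S : Finset α) : Prop :=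
  ∀ ⦃u v : α⦄, G.Adj u v → u ∈ S ∨ v ∈ S

/-- The vertex cover number `α(G)`. -/
noncomputable def vcNum (G : SimpleGraph α) : ℕ :=
  sInf {k | ∃ S : Finset α, IsVertexCover G S ∧ S.card = k}

/-- The independence number `β(G)`. -/
noncomputable def indepNum (G : SimpleGraph α) : ℕ :=
  sSup {k | ∃ S : Finset α, (∀ u ∈ S, ∀ v ∈ S, ¬ G.Adj u v) ∧ S.card = k}


private lemma enat_two_le {d : ℕ∞} (h0 : d ≠ 0) (h1 : d ≠ 1) : 2 ≤ d := by
  rw [← one_add_one_eq_two, ENat.add_one_le_iff (by simp)]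
  exact lt_of_le_of_ne (Order.one_le_iff_pos.mpr (pos_iff_ne_zero.mpr h0)) (Ne.symm h1)

private lemma exists_adj_of_connected {G : SimpleGraph α} (hG : G.Connected)
    (hGn : Nontrivial α) (a : α) : ∃ b, G.Adj a b := by
  obtain ⟨c, hc⟩ := exists_ne a
  obtain ⟨p⟩ := hG.preconnected a c
  cases p with
  | nil => exact absurd rfl hc.symm
  | cons h q => exact ⟨_, h⟩

private lemma lex_edist_le_two {G : SimpleGraph α} {H : SimpleGraph β} (hG : G.Connected)
    (hGn : Nontrivial α) (a : α) (x y : β) : (lexProd G H).edist (a, x) (a, y) ≤ 2 := by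
  obtain ⟨b, hb⟩ := exists_adj_of_connected hG hGn a
  calc (lexProd G H).edist (a, x) (a, y)
      ≤ (lexProd G H).edist (a, x) (b, x) + (lexProd G H).edist (b, x) (a, y) :=
        SimpleGraph.edist_triangle
    _ ≤ 1 + 1 := add_le_add
        (edist_eq_one_iff_adj.mpr (Or.inl hb)).le
        (edist_eq_one_iff_adj.mpr (Or.inl hb.symm)).le
    _ = 2 := one_add_one_eq_two

theorem stmt_5 (G : SimpleGraph α) (H : SimpleGraph β) (hG : G.Connected)
    (hGn : Nontrivial α) (a : α) (x y : β) (hxy : x ≠ y) :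
    MMD (lexProd G H) (a, x) (a, y) ↔ (gstar H).Adj x y := by
  by_cases hadj : H.Adj x y
  · -- adjacent case: edist = 1, MMD ↔ TrueTwins
    have hd : (lexProd G H).edist (a, x) (a, y) = 1 :=
      edist_eq_one_iff_adj.mpr (Or.inr ⟨rfl, hadj⟩)
    have hd' : (lexProd G H).edist (a, y) (a, x) = 1 :=
      edist_eq_one_iff_adj.mpr (Or.inr ⟨rfl, hadj.symm⟩)
    have key : ∀ (u v : β), H.Adj u v →
        MaxDistant (lexProd G H) (a, u) (a, v) →
        (∀ w, H.Adj u w ∨ u = w → H.Adj v w ∨ v = w) := by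
      intro u v huv hmax w hw
      rcases hw with hw | rfl
      · have h1 : (lexProd G H).edist (a, v) (a, w) ≤
            (lexProd G H).edist (a, u) (a, v) :=
          hmax (a, w) (Or.inr ⟨rfl, hw⟩)
        have hduv : (lexProd G H).edist (a, u) (a, v) = 1 :=
          edist_eq_one_iff_adj.mpr (Or.inr ⟨rfl, huv⟩)
        rw [hduv] at h1
        rcases eq_or_ne ((a, v) : α × β) (a, w) with he | hne
        · exact Or.inr (congrArg Prod.snd he)
        · have := edist_eq_one_iff_adj.mp
            (le_antisymm h1 (Order.one_le_iff_pos.mpr (edist_pos_of_ne hne)))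
          rcases this with h | ⟨-, h⟩
          · exact absurd h G.irrefl
          · exact Or.inl h
      · exact Or.inl huv.symm
    constructor
    · rintro ⟨h1, h2⟩
      refine ⟨hxy, Or.inr fun w => ⟨key x y hadj h1 w, key y x hadj.symm h2 w⟩⟩
    · rintro ⟨-, (h2 | htw)⟩
      · exact absurd (edist_eq_one_iff_adj.mpr hadj) (by intro h; rw [h] at h2; norm_num at h2)
      · constructor
        · rintro ⟨b, z⟩ (hab | ⟨rfl, hxz⟩)
          · rw [hd]
            exact (edist_eq_one_iff_adj.mpr (Or.inl hab)).le
          · rw [hd]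
            rcases (htw z).mp (Or.inl hxz) with h | rfl
            · exact (edist_eq_one_iff_adj.mpr (Or.inr ⟨rfl, h⟩)).le
            · simp
        · rintro ⟨b, z⟩ (hab | ⟨rfl, hyz⟩)
          · rw [hd']
            exact (edist_eq_one_iff_adj.mpr (Or.inl hab)).le
          · rw [hd']
            rcases (htw z).mpr (Or.inl hyz) with h | rfl
            · exact (edist_eq_one_iff_adj.mpr (Or.inr ⟨rfl, h⟩)).le
            · simp
  · -- nonadjacent case: both sides hold
    have hne : ((a, x) : α × β) ≠ (a, y) := by simp [hxy]
    have hnadj : ¬ (lexProd G H).Adj (a, x) (a, y) := by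
      rintro (h | ⟨-, h⟩)
      · exact G.irrefl h
      · exact hadj h
    have hd2 : 2 ≤ (lexProd G H).edist (a, x) (a, y) :=
      enat_two_le (by simpa using hne) (fun h => hnadj (edist_eq_one_iff_adj.mp h))
    have hd2' : 2 ≤ (lexProd G H).edist (a, y) (a, x) := by
      rwa [SimpleGraph.edist_comm] at hd2
    constructor
    · intro _
      refine ⟨hxy, Or.inl (enat_two_le (by simpa using hxy)
        (fun h => hadj (edist_eq_one_iff_adj.mp h)))⟩
    · intro _
      constructor
      · rintro ⟨b, z⟩ (hab | ⟨rfl, hxz⟩)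
        · exact le_trans (edist_eq_one_iff_adj.mpr (Or.inl hab)).le
            (le_trans one_le_two hd2)
        · exact le_trans (lex_edist_le_two hG hGn a y z) hd2
      · rintro ⟨b, z⟩ (hab | ⟨rfl, hyz⟩)
        · exact le_trans (edist_eq_one_iff_adj.mpr (Or.inl hab)).le
            (le_trans one_le_two hd2')
        · exact le_trans (lex_edist_le_two hG hGn a x z) hd2'


end Paper
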